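/- Let G be a finite simple graph comprised of exactly two communities C_1 and C_2 with |C_1| = |C_2| = n, and let k be the total number of intercommunity edges between C_1 and C_2. If k ≤ n − 1, then for every α ∈ [0,1], every intercommunity edge e between C_1 and C_2 satisfies κ^α(e) ≤ 0. -/

import Mathlib

open Finset

/-- A probability measure on the vertex set. -/
def IsProbMeasure {V : Type*} [Fintype V] (μ : V → ℝ) : Prop :=
  (∀ z, 0 ≤ μ z) ∧ ∑ z, μ z = 1

/-- A transference plan between two probability measures. -/
def IsTransferencePlan {V : Type*} [Fintype V] (μ ν : V → ℝ) (π : V → V → ℝ) : Prop :=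
  (∀ i j, 0 ≤ π i j) ∧ (∀ i, ∑ j, π i j = μ i) ∧ (∀ j, ∑ i, π i j = ν j)

/-- The 1-Wasserstein distance between two measures on a graph:
the infimum of the transport cost over all transference plans. -/
noncomputable def Wass {V : Type*} [Fintype V] (G : SimpleGraph V) (μ ν : V → ℝ) : ℝ :=
  sInf {c : ℝ | ∃ π : V → V → ℝ, IsTransferencePlan μ ν π ∧
    c = ∑ i : V, ∑ j : V, π i j * (G.dist i j : ℝ)}

open scoped Classical in
/-- The α-lazy random walk measure at a vertex `x`:
mass α at `x`, mass (1-α)/dₓ at each neighbour of `x`. -/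
noncomputable def lazyWalk {V : Type*} [Fintype V] (G : SimpleGraph V) (α : ℝ) (x : V) :
    V → ℝ :=
  fun z =>
    if z = x then α
    else if G.Adj x z then (1 - α) / ((G.neighborSet x).ncard : ℝ) else 0

/-- The α-Ollivier-Ricci curvature of the edge `xy`: κ = 1 − W(mₓ, m_y). -/
noncomputable def kappa {V : Type*} [Fintype V] (G : SimpleGraph V) (α : ℝ) (x y : V) : ℝ :=
  1 - Wass G (lazyWalk G α x) (lazyWalk G α y)

/-- Lipschitz along walks. -/
lemma lip_walk {V : Type*} (G : SimpleGraph V) (f : V → ℝ)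
    (hf : ∀ i j, G.Adj i j → f i - f j ≤ 1) :
    ∀ {i j : V} (p : G.Walk i j), f i - f j ≤ p.length := by
  intro i j p
  induction p with
  | nil => simp
  | cons h p ih =>
    simp only [SimpleGraph.Walk.length_cons]
    push_cast
    have := hf _ _ h
    linarith

lemma lip_dist {V : Type*} (G : SimpleGraph V) (f : V → ℝ)
    (hf : ∀ i j, G.Adj i j → f i - f j ≤ 1) (hconn : G.Preconnected) (i j : V) :
    f i - f j ≤ (G.dist i j : ℝ) := by
  obtain ⟨p, hp⟩ := (hconn i j).exists_walk_length_eq_dist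
  calc f i - f j ≤ (p.length : ℝ) := lip_walk G f hf p
    _ = _ := by rw [hp]

/-- Kantorovich easy direction. -/
lemma wass_ge {V : Type*} [Fintype V] (G : SimpleGraph V) (μ ν : V → ℝ)
    (hμ : IsProbMeasure μ) (hν : IsProbMeasure ν) (f : V → ℝ)
    (hf : ∀ i j, f i - f j ≤ (G.dist i j : ℝ)) :
    (∑ i, f i * μ i) - ∑ j, f j * ν j ≤ Wass G μ ν := by
  apply le_csInf
  · refine ⟨_, ⟨fun i j => μ i * ν j, ⟨?_, ?_, ?_⟩, rfl⟩⟩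
    · exact fun i j => mul_nonneg (hμ.1 i) (hν.1 j)
    · intro i; rw [← Finset.mul_sum, hν.2, mul_one]
    · intro j; rw [← Finset.sum_mul, hμ.2, one_mul]
  · rintro c ⟨π, ⟨hpos, hrow, hcol⟩, rfl⟩
    have h1 : ∀ i j : V, π i j * (f i - f j) ≤ π i j * (G.dist i j : ℝ) := fun i j =>
      mul_le_mul_of_nonneg_left (hf i j) (hpos i j)
    calc (∑ i, f i * μ i) - ∑ j, f j * ν j
        = ∑ i : V, ∑ j : V, π i j * (f i - f j) := by
          simp only [mul_sub, Finset.sum_sub_distrib]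
          congr 1
          · exact Finset.sum_congr rfl fun i _ => by rw [← Finset.sum_mul, hrow i, mul_comm]
          · rw [Finset.sum_comm]
            exact Finset.sum_congr rfl fun j _ => by rw [← Finset.sum_mul, hcol j, mul_comm]
      _ ≤ _ := Finset.sum_le_sum fun i _ => Finset.sum_le_sum fun j _ => h1 i j

lemma sum_mul_lazyWalk {V : Type*} [Fintype V] [DecidableEq V]
    (G : SimpleGraph V) [DecidableRel G.Adj] (α : ℝ) (x : V) (f : V → ℝ) :
    ∑ z, f z * lazyWalk G α x z =
      α * f x + ((1 - α) / ((G.neighborSet x).ncard : ℝ)) *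
        ∑ z ∈ Finset.univ.filter (fun z => G.Adj x z), f z := by
  classical
  have hsplit : ∀ z : V, f z * lazyWalk G α x z =
      (if z = x then α * f x else 0) +
      (if G.Adj x z then ((1 - α) / ((G.neighborSet x).ncard : ℝ)) * f z else 0) := by
    intro z
    by_cases hz : z = x
    · subst hz
      rw [if_pos rfl, if_neg (G.irrefl), add_zero]
      unfold lazyWalk
      rw [if_pos rfl, mul_comm]
    · rw [if_neg hz]
      unfold lazyWalk
      rw [if_neg hz, zero_add]
      by_cases ha : G.Adj x z
      · rw [if_pos ha, if_pos ha, mul_comm]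
      · rw [if_neg ha, if_neg ha, mul_zero]
  rw [Finset.sum_congr rfl fun z _ => hsplit z, Finset.sum_add_distrib]
  congr 1
  · simp
  · rw [Finset.mul_sum, Finset.sum_filter]

lemma ncard_nbr {V : Type*} [Fintype V] (G : SimpleGraph V) [DecidableRel G.Adj] (x : V) :
    (G.neighborSet x).ncard = (Finset.univ.filter (fun z => G.Adj x z)).card := by
  rw [Set.ncard_eq_toFinset_card']
  congr 1
  ext z
  simp only [Set.mem_toFinset, SimpleGraph.mem_neighborSet, Finset.mem_filter, Finset.mem_univ,
    true_and]

lemma lazy_prob {V : Type*} [Fintype V] [DecidableEq V]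
    (G : SimpleGraph V) [DecidableRel G.Adj] (α : ℝ) (x : V)
    (hα0 : 0 ≤ α) (hα1 : α ≤ 1) (hd : 0 < (G.neighborSet x).ncard) :
    IsProbMeasure (lazyWalk G α x) := by
  constructor
  · intro z
    unfold lazyWalk
    split_ifs
    · exact hα0
    · exact div_nonneg (by linarith) (Nat.cast_nonneg _)
    · exact le_refl 0
  · have h := sum_mul_lazyWalk G α x (fun _ => (1 : ℝ))
    simp only [one_mul, mul_one] at h
    rw [h, Finset.sum_const, nsmul_eq_mul, mul_one, ← ncard_nbr]
    have hd' : ((G.neighborSet x).ncard : ℝ) ≠ 0 := by positivity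
    field_simp
    ring

open scoped Classical in
lemma cross_count {V : Type*} [Fintype V] [DecidableEq V] (G : SimpleGraph V)
    (C₁ C₂ : Finset V) (hdisj : Disjoint C₁ C₂)
    (x : V) (hx : x ∈ C₁) :
    ((C₁.filter (fun z => ∃ w ∈ C₂, G.Adj z w)).erase x).card
      + (C₂.filter (fun z => G.Adj x z)).card
      ≤ {e ∈ G.edgeSet | ∃ u v : V, e = s(u, v) ∧ u ∈ C₁ ∧ v ∈ C₂}.ncard := by
  classical
  set Ec : Set (Sym2 V) := {e ∈ G.edgeSet | ∃ u v : V, e = s(u, v) ∧ u ∈ C₁ ∧ v ∈ C₂}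
    with hEc
  have hfin : Ec.Finite := Set.toFinite _
  rw [Set.ncard_eq_toFinset_card _ hfin]
  set T := (C₁.filter (fun z => ∃ w ∈ C₂, G.Adj z w)).erase x with hT
  set B := C₂.filter (fun z => G.Adj x z) with hB
  have hTC₁ : ∀ z ∈ T, z ∈ C₁ := fun z hz => (Finset.mem_filter.mp (Finset.mem_erase.mp hz).2).1
  have hBC₂ : ∀ z ∈ B, z ∈ C₂ := fun z hz => (Finset.mem_filter.mp hz).1
  have hch : ∀ z ∈ T, ∃ w, w ∈ C₂ ∧ G.Adj z w := by
    intro z hz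
    obtain ⟨w, hw1, hw2⟩ := (Finset.mem_filter.mp (Finset.mem_erase.mp hz).2).2
    exact ⟨w, hw1, hw2⟩
  choose! w hw1 hw2 using hch
  set F : V → Sym2 V := fun z => if z ∈ C₂ then s(x, z) else s(z, w z) with hF
  have hnotC₂ : ∀ z ∈ C₁, z ∉ C₂ := fun z hz => Finset.disjoint_left.mp hdisj hz
  have hTB : Disjoint T B := by
    rw [Finset.disjoint_left]
    exact fun z hz hz' => hnotC₂ z (hTC₁ z hz) (hBC₂ z hz')
  rw [← Finset.card_union_of_disjoint hTB]
  apply Finset.card_le_card_of_injOn F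
  · intro z hz
    rw [Finset.mem_coe, Set.Finite.mem_toFinset]
    rcases Finset.mem_union.mp hz with hz | hz
    · have hzC₂ : z ∉ C₂ := hnotC₂ z (hTC₁ z hz)
      have : F z = s(z, w z) := by rw [hF]; exact if_neg hzC₂
      rw [this]
      exact ⟨(G.mem_edgeSet).mpr (hw2 z hz), z, w z, rfl, hTC₁ z hz, hw1 z hz⟩
    · have : F z = s(x, z) := by rw [hF]; exact if_pos (hBC₂ z hz)
      rw [this]
      exact ⟨(G.mem_edgeSet).mpr (Finset.mem_filter.mp hz).2, x, z, rfl, hx, hBC₂ z hz⟩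
  · intro z hz z' hz' heq
    simp only [Finset.coe_union, Set.mem_union, Finset.mem_coe] at hz hz'
    rcases hz with hz | hz <;> rcases hz' with hz' | hz'
    · rw [hF] at heq
      simp only [if_neg (hnotC₂ z (hTC₁ z hz)), if_neg (hnotC₂ z' (hTC₁ z' hz'))] at heq
      rcases Sym2.eq_iff.mp heq with ⟨h1, _⟩ | ⟨h1, h2⟩
      · exact h1
      · exact absurd (h1 ▸ hw1 z' hz') (hnotC₂ z (hTC₁ z hz))
    · rw [hF] at heq
      simp only [if_neg (hnotC₂ z (hTC₁ z hz)), if_pos (hBC₂ z' hz')] at heq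
      rcases Sym2.eq_iff.mp heq with ⟨h1, _⟩ | ⟨h1, h2⟩
      · exact absurd h1 (Finset.mem_erase.mp hz).1
      · exact absurd (h1 ▸ hBC₂ z' hz') (hnotC₂ z (hTC₁ z hz))
    · rw [hF] at heq
      simp only [if_pos (hBC₂ z hz), if_neg (hnotC₂ z' (hTC₁ z' hz'))] at heq
      rcases Sym2.eq_iff.mp heq with ⟨h1, _⟩ | ⟨h1, h2⟩
      · exact absurd h1.symm (Finset.mem_erase.mp hz').1
      · have : x ∈ C₂ := by rw [h1]; exact hw1 z' hz'
        exact absurd this (hnotC₂ x hx)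
    · rw [hF] at heq
      simp only [if_pos (hBC₂ z hz), if_pos (hBC₂ z' hz')] at heq
      rcases Sym2.eq_iff.mp heq with ⟨_, h2⟩ | ⟨h1, h2⟩
      · exact h2
      · exact h2.trans h1

open scoped Classical

set_option maxHeartbeats 2000000 in
/-- A graph comprised of exactly two communities of equal size `n` with `k`
intercommunity edges. If `k ≤ n − 1`, then every intercommunity edge has nonpositive
α-Ollivier-Ricci curvature for every `α ∈ [0,1]`. -/
theorem nonpos_curvature_two_equal_communities
    {V : Type*} [Fintype V] [DecidableEq V] (G : SimpleGraph V)
    (C₁ C₂ : Finset V) (hdisj : Disjoint C₁ C₂) (hcover : C₁ ∪ C₂ = Finset.univ)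
    (hne₁ : C₁.Nonempty) (hne₂ : C₂.Nonempty)
    (hcl₁ : ∀ u ∈ C₁, ∀ v ∈ C₁, u ≠ v → G.Adj u v)
    (hcl₂ : ∀ u ∈ C₂, ∀ v ∈ C₂, u ≠ v → G.Adj u v)
    (n : ℕ) (hm : C₁.card = n) (hn : C₂.card = n)
    (k : ℕ)
    (hk : k = {e ∈ G.edgeSet | ∃ u v : V, e = s(u, v) ∧ u ∈ C₁ ∧ v ∈ C₂}.ncard)
    (hbound : k + 1 ≤ n)
    (α : ℝ) (hα0 : 0 ≤ α) (hα1 : α ≤ 1)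
    (x y : V) (hx : x ∈ C₁) (hy : y ∈ C₂) (hxy : G.Adj x y) :
    kappa G α x y ≤ 0 := by
  have hmem : ∀ z : V, z ∈ C₁ ∨ z ∈ C₂ := by
    intro z
    have hz : z ∈ C₁ ∪ C₂ := by rw [hcover]; exact Finset.mem_univ z
    exact Finset.mem_union.mp hz
  have hnotC₂ : ∀ z ∈ C₁, z ∉ C₂ := fun z hz => Finset.disjoint_left.mp hdisj hz
  have hnotC₁ : ∀ z ∈ C₂, z ∉ C₁ := fun z hz => Finset.disjoint_right.mp hdisj hz
  set T₁ := C₁.filter (fun z => ∃ w ∈ C₂, G.Adj z w) with hT₁def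
  set T₂ := C₂.filter (fun z => ∃ w ∈ C₁, G.Adj z w) with hT₂def
  have hT₁C₁ : ∀ z ∈ T₁, z ∈ C₁ := fun z hz => (Finset.mem_filter.mp hz).1
  have hT₂C₂ : ∀ z ∈ T₂, z ∈ C₂ := fun z hz => (Finset.mem_filter.mp hz).1
  have hxT₁ : x ∈ T₁ := Finset.mem_filter.mpr ⟨hx, y, hy, hxy⟩
  have hyT₂ : y ∈ T₂ := Finset.mem_filter.mpr ⟨hy, x, hx, hxy.symm⟩
  set f : V → ℝ :=
    fun z => if z ∈ C₁ then (if z ∈ T₁ then 2 else 3) else (if z ∈ T₂ then 1 else 0)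
    with hfdef
  have hfval : ∀ z, f z =
      if z ∈ C₁ then (if z ∈ T₁ then (2:ℝ) else 3) else (if z ∈ T₂ then 1 else 0) :=
    fun z => by rw [hfdef]
  have hfT₁ : ∀ z ∈ T₁, f z = 2 := fun z hz => by
    rw [hfval z, if_pos (hT₁C₁ z hz), if_pos hz]
  have hfC₁3 : ∀ z ∈ C₁, z ∉ T₁ → f z = 3 := fun z hz hz' => by
    rw [hfval z, if_pos hz, if_neg hz']
  have hfT₂ : ∀ z ∈ T₂, f z = 1 := fun z hz => by
    rw [hfval z, if_neg (hnotC₁ z (hT₂C₂ z hz)), if_pos hz]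
  have hfC₂0 : ∀ z ∈ C₂, z ∉ T₂ → f z = 0 := fun z hz hz' => by
    rw [hfval z, if_neg (hnotC₁ z hz), if_neg hz']
  have hfC₁b : ∀ z ∈ C₁, 2 ≤ f z ∧ f z ≤ 3 := by
    intro z hz
    by_cases h : z ∈ T₁
    · rw [hfT₁ z h]; norm_num
    · rw [hfC₁3 z hz h]; norm_num
  have hfC₂b : ∀ z ∈ C₂, 0 ≤ f z ∧ f z ≤ 1 := by
    intro z hz
    by_cases h : z ∈ T₂
    · rw [hfT₂ z h]; norm_num
    · rw [hfC₂0 z hz h]; norm_num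
  -- edge-Lipschitz
  have hlip : ∀ i j, G.Adj i j → f i - f j ≤ 1 := by
    intro i j hij
    rcases hmem i with hi | hi <;> rcases hmem j with hj | hj
    · have h1 := hfC₁b i hi; have h2 := hfC₁b j hj; linarith [h1.1, h1.2, h2.1, h2.2]
    · have h1 : f i = 2 := hfT₁ i (Finset.mem_filter.mpr ⟨hi, j, hj, hij⟩)
      have h2 : f j = 1 := hfT₂ j (Finset.mem_filter.mpr ⟨hj, i, hi, hij.symm⟩)
      linarith
    · have h1 := hfC₂b i hi; have h2 := hfC₁b j hj; linarith [h1.1, h1.2, h2.1, h2.2]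
    · have h1 := hfC₂b i hi; have h2 := hfC₂b j hj; linarith [h1.1, h1.2, h2.1, h2.2]
  -- connectivity
  have hreach : ∀ z, G.Reachable x z := by
    intro z
    rcases hmem z with hz | hz
    · by_cases h : z = x
      · subst h; exact SimpleGraph.Reachable.refl z
      · exact (hcl₁ x hx z hz (fun hh => h hh.symm)).reachable
    · by_cases h : z = y
      · subst h; exact hxy.reachable
      · exact hxy.reachable.trans (hcl₂ y hy z hz (fun hh => h hh.symm)).reachable
  have hpc : G.Preconnected := fun i j => ((hreach i).symm).trans (hreach j)
  have hdlip := lip_dist G f hlip hpc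
  -- sets of neighbours
  set A := C₁.filter (fun z => G.Adj y z) with hAdef
  set B := C₂.filter (fun z => G.Adj x z) with hBdef
  have hxA : x ∈ A := Finset.mem_filter.mpr ⟨hx, hxy.symm⟩
  have hyB : y ∈ B := Finset.mem_filter.mpr ⟨hy, hxy⟩
  have hNx : Finset.univ.filter (fun z => G.Adj x z) = (C₁.erase x) ∪ B := by
    ext z
    simp only [Finset.mem_filter, Finset.mem_univ, true_and, Finset.mem_union,
      Finset.mem_erase, hBdef]
    constructor
    · intro hz
      rcases hmem z with h | h
      · exact Or.inl ⟨(G.ne_of_adj hz).symm, h⟩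
      · exact Or.inr ⟨h, hz⟩
    · rintro (⟨hzx, hzC⟩ | hzB)
      · exact hcl₁ x hx z hzC (fun h => hzx h.symm)
      · exact hzB.2
  have hNy : Finset.univ.filter (fun z => G.Adj y z) = (C₂.erase y) ∪ A := by
    ext z
    simp only [Finset.mem_filter, Finset.mem_univ, true_and, Finset.mem_union,
      Finset.mem_erase, hAdef]
    constructor
    · intro hz
      rcases hmem z with h | h
      · exact Or.inr ⟨h, hz⟩
      · exact Or.inl ⟨(G.ne_of_adj hz).symm, h⟩
    · rintro (⟨hzy, hzC⟩ | hzA)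
      · exact hcl₂ y hy z hzC (fun h => hzy h.symm)
      · exact hzA.2
  have hdisjxB : Disjoint (C₁.erase x) B := by
    rw [Finset.disjoint_left]
    intro z hz hz'
    exact hnotC₂ z (Finset.mem_of_mem_erase hz) ((Finset.mem_filter.mp hz').1)
  have hdisjyA : Disjoint (C₂.erase y) A := by
    rw [Finset.disjoint_left]
    intro z hz hz'
    exact hnotC₁ z (Finset.mem_of_mem_erase hz) ((Finset.mem_filter.mp hz').1)
  -- cardinalities
  set m := n - 1 with hmdef
  have hnm : n = m + 1 := by omega
  have hcx : (C₁.erase x).card = m := by rw [Finset.card_erase_of_mem hx, hm]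
  have hcy : (C₂.erase y).card = m := by rw [Finset.card_erase_of_mem hy, hn]
  have hdegx : (G.neighborSet x).ncard = m + B.card := by
    rw [ncard_nbr, hNx, Finset.card_union_of_disjoint hdisjxB, hcx]
  have hdegy : (G.neighborSet y).ncard = m + A.card := by
    rw [ncard_nbr, hNy, Finset.card_union_of_disjoint hdisjyA, hcy]
  set s' := (T₁.erase x).card with hs'def
  set t' := (T₂.erase y).card with ht'def
  set u' := ((C₁.erase x).filter (fun z => ¬ z ∈ T₁)).card with hu'def
  have hfilT : (C₁.erase x).filter (fun z => z ∈ T₁) = T₁.erase x := by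
    ext z
    simp only [Finset.mem_filter, Finset.mem_erase]
    constructor
    · rintro ⟨⟨h1, _⟩, h3⟩; exact ⟨h1, h3⟩
    · rintro ⟨h1, h2⟩; exact ⟨⟨h1, hT₁C₁ z h2⟩, h2⟩
  have hsu : s' + u' = m := by
    rw [hs'def, hu'def, ← hfilT, ← hcx]
    exact Finset.card_filter_add_card_filter_not (fun z => z ∈ T₁)
  -- sums of f over pieces
  have hS1 : ∑ z ∈ C₁.erase x, f z = 2 * (s' : ℝ) + 3 * (u' : ℝ) := by
    have hcong : ∀ z ∈ C₁.erase x, f z = if z ∈ T₁ then (2:ℝ) else 3 := by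
      intro z hz
      by_cases h : z ∈ T₁
      · rw [if_pos h]; exact hfT₁ z h
      · rw [if_neg h]; exact hfC₁3 z (Finset.mem_of_mem_erase hz) h
    rw [Finset.sum_congr rfl hcong, Finset.sum_ite, Finset.sum_const, Finset.sum_const,
      hfilT, nsmul_eq_mul, nsmul_eq_mul, ← hs'def]
    push_cast
    ring
  have hSB : ∑ z ∈ B, f z = (B.card : ℝ) := by
    have hcong : ∀ z ∈ B, f z = 1 := by
      intro z hz
      obtain ⟨hz1, hz2⟩ := Finset.mem_filter.mp hz
      exact hfT₂ z (Finset.mem_filter.mpr ⟨hz1, x, hx, hz2.symm⟩)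
    rw [Finset.sum_congr rfl hcong, Finset.sum_const, nsmul_eq_mul, mul_one]
  have hSA : ∑ z ∈ A, f z = 2 * (A.card : ℝ) := by
    have hcong : ∀ z ∈ A, f z = 2 := by
      intro z hz
      obtain ⟨hz1, hz2⟩ := Finset.mem_filter.mp hz
      exact hfT₁ z (Finset.mem_filter.mpr ⟨hz1, y, hy, hz2.symm⟩)
    rw [Finset.sum_congr rfl hcong, Finset.sum_const, nsmul_eq_mul, mul_comm]
  have hS2 : ∑ z ∈ C₂.erase y, f z = (t' : ℝ) := by
    have hcong : ∀ z ∈ C₂.erase y, f z = if z ∈ T₂ then (1:ℝ) else 0 := by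
      intro z hz
      by_cases h : z ∈ T₂
      · rw [if_pos h]; exact hfT₂ z h
      · rw [if_neg h]; exact hfC₂0 z (Finset.mem_of_mem_erase hz) h
    have hfilT2 : (C₂.erase y).filter (fun z => z ∈ T₂) = T₂.erase y := by
      ext z
      simp only [Finset.mem_filter, Finset.mem_erase]
      constructor
      · rintro ⟨⟨h1, _⟩, h3⟩; exact ⟨h1, h3⟩
      · rintro ⟨h1, h2⟩; exact ⟨⟨h1, hT₂C₂ z h2⟩, h2⟩
    rw [Finset.sum_congr rfl hcong, Finset.sum_ite, Finset.sum_const, Finset.sum_const,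
      hfilT2, nsmul_eq_mul, nsmul_eq_mul, ← ht'def]
    push_cast
    ring
  -- lazy walk sums
  have hfx : f x = 2 := hfT₁ x hxT₁
  have hfy : f y = 1 := hfT₂ y hyT₂
  have hSx := sum_mul_lazyWalk G α x f
  rw [hNx, Finset.sum_union hdisjxB, hS1, hSB, hdegx, hfx] at hSx
  have hSy := sum_mul_lazyWalk G α y f
  rw [hNy, Finset.sum_union hdisjyA, hS2, hSA, hdegy, hfy] at hSy
  -- counting inequalities
  have hco1 : s' + B.card ≤ k := by
    have h := cross_count G C₁ C₂ hdisj x hx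
    rw [← hk] at h
    rw [hs'def, hBdef, hT₁def]
    exact h
  have hco2 : t' + A.card ≤ k := by
    have h := cross_count G C₂ C₁ hdisj.symm y hy
    have hswap : {e ∈ G.edgeSet | ∃ u v : V, e = s(u, v) ∧ u ∈ C₂ ∧ v ∈ C₁}
        = {e ∈ G.edgeSet | ∃ u v : V, e = s(u, v) ∧ u ∈ C₁ ∧ v ∈ C₂} := by
      ext e
      constructor <;> rintro ⟨he, u, v, rfl, h1, h2⟩ <;>
        exact ⟨he, v, u, Sym2.eq_swap.symm, h2, h1⟩
    rw [hswap, ← hk] at h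
    rw [ht'def, hAdef, hT₂def]
    exact h
  have hb1 : 1 ≤ B.card := Finset.card_pos.mpr ⟨y, hyB⟩
  have ha1 : 1 ≤ A.card := Finset.card_pos.mpr ⟨x, hxA⟩
  have hkm : k ≤ m := by omega
  -- real arithmetic
  set aR := (A.card : ℝ) with haR
  set bR := (B.card : ℝ) with hbR
  set sR := (s' : ℝ) with hsR
  set tR := (t' : ℝ) with htR
  set uR := (u' : ℝ) with huR
  set mR := (m : ℝ) with hmR
  have haR1 : 1 ≤ aR := by rw [haR]; exact_mod_cast ha1
  have hbR1 : 1 ≤ bR := by rw [hbR]; exact_mod_cast hb1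
  have hmR0 : 0 ≤ mR := by rw [hmR]; exact Nat.cast_nonneg _
  have hsR0 : 0 ≤ sR := by rw [hsR]; exact Nat.cast_nonneg _
  have htR0 : 0 ≤ tR := by rw [htR]; exact Nat.cast_nonneg _
  have huR0 : 0 ≤ uR := by rw [huR]; exact Nat.cast_nonneg _
  have hsuR : sR + uR = mR := by rw [hsR, huR, hmR]; exact_mod_cast hsu
  have hco1R : sR + bR ≤ (k : ℝ) := by rw [hsR, hbR]; exact_mod_cast hco1
  have hco2R : tR + aR ≤ (k : ℝ) := by rw [htR, haR]; exact_mod_cast hco2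
  have hkmR : (k : ℝ) ≤ mR := by rw [hmR]; exact_mod_cast hkm
  have hdbpos : (0:ℝ) < mR + bR := by linarith
  have hdapos : (0:ℝ) < mR + aR := by linarith
  have key : (tR + 2*aR) * (mR + bR) + (mR + bR) * (mR + aR)
      ≤ (2*sR + 3*uR + bR) * (mR + aR) := by
    have e1 : tR + 2*aR ≤ mR + aR := by linarith
    have e2 : mR + bR ≤ mR + uR := by linarith
    have f1 : (tR + 2*aR) * (mR + bR) ≤ (mR + aR) * (mR + bR) :=
      mul_le_mul_of_nonneg_right e1 (le_of_lt hdbpos)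
    have f2 : (mR + aR) * (mR + bR) ≤ (mR + aR) * (mR + uR) :=
      mul_le_mul_of_nonneg_left e2 (le_of_lt hdapos)
    nlinarith [f1, f2, hsuR]
  have hPQ : (tR + 2*aR)/(mR + aR) + 1 ≤ (2*sR + 3*uR + bR)/(mR + bR) := by
    have heq : (tR + 2*aR)/(mR + aR) + 1 = ((tR + 2*aR) + (mR + aR))/(mR + aR) := by
      field_simp
    rw [heq, div_le_div_iff₀ hdapos hdbpos]
    nlinarith [key]
  have hWlow : (1:ℝ) ≤ (∑ i, f i * lazyWalk G α x i) - ∑ j, f j * lazyWalk G α y j := by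
    rw [hSx, hSy]
    push_cast
    have h1α : (0:ℝ) ≤ 1 - α := by linarith
    have hmul := mul_le_mul_of_nonneg_left hPQ h1α
    have ex : (1 - α)/(mR + bR) * (2*sR + 3*uR + bR)
        = (1 - α) * ((2*sR + 3*uR + bR)/(mR + bR)) := by ring
    have ey : (1 - α)/(mR + aR) * (tR + 2*aR)
        = (1 - α) * ((tR + 2*aR)/(mR + aR)) := by ring
    nlinarith [hmul, ex, ey]
  have hdx0 : 0 < (G.neighborSet x).ncard := by rw [hdegx]; omega
  have hdy0 : 0 < (G.neighborSet y).ncard := by rw [hdegy]; omega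
  have hμ := lazy_prob G α x hα0 hα1 hdx0
  have hν := lazy_prob G α y hα0 hα1 hdy0
  have hW := wass_ge G (lazyWalk G α x) (lazyWalk G α y) hμ hν f hdlip
  unfold kappa
  linarith [hWlow, hW]
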